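/- Let n ≥ 7 and let G and H be simple graphs on n vertices that share n−1 cards via vertices u ∈ V(G), w ∈ V(H) and a bijection π. Suppose Δ(G) = Δ(H) = n−2, deg(u,G) < n−2, and deg(w,H) < n−2. Then for every integer r ≥ 1 we have κ_r(G) = κ_r(H). -/

import Mathlib

open SimpleGraph Finset
open scoped Classical
set_option linter.unusedSectionVars false
set_option maxHeartbeats 1000000

/-- `kappa G r` is the number of `r`-cliques of the graph `G`. -/
noncomputable def kappa {V : Type*} (G : SimpleGraph V) (r : ℕ) : ℕ :=
  (G.cliqueSet r).ncard

/-- `degR G r v` is the number of `r`-cliques of `G` that contain the vertex `v`. -/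
noncomputable def degR {V : Type*} (G : SimpleGraph V) (r : ℕ) (v : V) : ℕ :=
  {s | s ∈ G.cliqueSet r ∧ v ∈ s}.ncard

/-- `deg G v` is the degree of the vertex `v` in `G`. -/
noncomputable def deg {V : Type*} (G : SimpleGraph V) (v : V) : ℕ :=
  (G.neighborSet v).ncard

/-- `gcard G v` is the card `G - v`: the induced subgraph of `G` on `V(G) \ {v}`. -/
def gcard {V : Type*} (G : SimpleGraph V) (v : V) : SimpleGraph {x : V // x ≠ v} :=
  G.induce {x : V | x ≠ v}

/-- The maximum degree `Δ(G)`. -/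
noncomputable def maxDeg {n : ℕ} (G : SimpleGraph (Fin n)) : ℕ :=
  Finset.univ.sup (fun v => deg G v)

/-- The minimum degree `δ(G)`. -/
noncomputable def minDeg {n : ℕ} (G : SimpleGraph (Fin n)) : ℕ :=
  sInf (Set.range (fun v => deg G v))

/-- `ℓ(G)`: the number of vertices of maximum degree. -/
noncomputable def numMaxDeg {n : ℕ} (G : SimpleGraph (Fin n)) : ℕ :=
  (Finset.univ.filter (fun v => deg G v = maxDeg G)).card

/-- `G` and `H` share `n-1` cards via the vertices `u`, `w` and the bijection `π`:
for every `v ≠ u`, the card `G - v` is isomorphic to the card `H - π(v)`. -/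
def ShareCardsVia {n : ℕ} (G H : SimpleGraph (Fin n)) (u w : Fin n)
    (π : {x : Fin n // x ≠ u} ≃ {y : Fin n // y ≠ w}) : Prop :=
  ∀ v : {x : Fin n // x ≠ u}, Nonempty (gcard G v.1 ≃g gcard H (π v).1)

/-- `G` and `H` share `n-1` cards. -/
def ShareCards {n : ℕ} (G H : SimpleGraph (Fin n)) : Prop :=
  ∃ (u w : Fin n) (π : {x : Fin n // x ≠ u} ≃ {y : Fin n // y ≠ w}),
    ShareCardsVia G H u w π

/-! ### Auxiliary counting lemmas -/

section Bridge
variable {V : Type*} [Fintype V] [DecidableEq V] (G : SimpleGraph V) (r : ℕ) (v : V)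

lemma kappa_eq_card : kappa G r = (univ.filter (fun s : Finset V => G.IsNClique r s)).card := by
  rw [kappa, Set.ncard_eq_toFinset_card']; congr 1; ext s; simp [SimpleGraph.mem_cliqueSet_iff]

lemma degR_eq_card :
    degR G r v = (univ.filter (fun s : Finset V => G.IsNClique r s ∧ v ∈ s)).card := by
  rw [degR, Set.ncard_eq_toFinset_card']; congr 1; ext s; simp [SimpleGraph.mem_cliqueSet_iff]

lemma deg_eq_card : deg G v = (univ.filter (fun t => G.Adj v t)).card := by
  rw [deg, Set.ncard_eq_toFinset_card']; congr 1; ext t; simp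

lemma gcard_adj (a b : {x : V // x ≠ v}) : (gcard G v).Adj a b ↔ G.Adj a b := by
  simp [gcard]

/-- Kelly's double counting -/
lemma sum_degR : ∑ v : V, degR G r v = r * kappa G r := by
  simp_rw [degR_eq_card, kappa_eq_card]
  have h1 : ∀ v : V, (univ.filter (fun s : Finset V => G.IsNClique r s ∧ v ∈ s)).card
      = ∑ s ∈ univ.filter (fun s : Finset V => G.IsNClique r s), if v ∈ s then 1 else 0 := by
    intro v
    rw [← Finset.filter_filter, Finset.card_filter]
  simp_rw [h1]
  rw [Finset.sum_comm]
  have h2 : ∀ s ∈ univ.filter (fun s : Finset V => G.IsNClique r s),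
      (∑ v : V, if v ∈ s then 1 else 0) = r := by
    intro s hs
    have : (∑ v : V, if v ∈ s then 1 else 0) = s.card := by
      rw [← Finset.card_filter]
      congr 1
      ext t; simp
    rw [this, (Finset.mem_filter.mp hs).2.card_eq]
  rw [Finset.sum_congr rfl h2, Finset.sum_const, smul_eq_mul, mul_comm]

/-- splitting: cliques not containing `v` are cliques of the card -/
lemma kappa_gcard_add_degR : kappa G r = kappa (gcard G v) r + degR G r v := by
  rw [kappa_eq_card, kappa_eq_card, degR_eq_card]
  have h2 := Finset.card_filter_add_card_filter_not
    (s := univ.filter (fun s : Finset V => G.IsNClique r s)) (p := fun s => v ∈ s)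
  rw [Finset.filter_filter, Finset.filter_filter] at h2
  have key : (univ.filter (fun s : Finset {x : V // x ≠ v} => (gcard G v).IsNClique r s)).card
      = (univ.filter (fun s : Finset V => G.IsNClique r s ∧ ¬ v ∈ s)).card := by
    apply Finset.card_bij
      (fun (s : Finset {x : V // x ≠ v}) _ => s.map (Function.Embedding.subtype _))
    · intro s hs
      simp only [Finset.mem_filter, Finset.mem_univ, true_and] at hs ⊢
      refine ⟨⟨?_, by rw [Finset.card_map, hs.card_eq]⟩, ?_⟩
      · intro a ha b hb hab
        simp only [Finset.coe_map, Set.mem_image, Finset.mem_coe,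
          Function.Embedding.coe_subtype] at ha hb
        obtain ⟨a', ha', rfl⟩ := ha
        obtain ⟨b', hb', rfl⟩ := hb
        have := hs.isClique ha' hb' (fun h => hab (by rw [h]))
        rwa [gcard_adj] at this
      · intro hv
        rw [Finset.mem_map] at hv
        obtain ⟨a, _, ha⟩ := hv
        exact a.2 (by simpa using ha)
    · intro s hs t ht h
      exact Finset.map_injective _ h
    · intro t ht
      simp only [Finset.mem_filter, Finset.mem_univ, true_and] at ht
      have hmap : (t.subtype (· ≠ v)).map (Function.Embedding.subtype _) = t := by
        rw [Finset.subtype_map]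
        exact Finset.filter_true_of_mem (fun a ha => fun h => ht.2 (h ▸ ha))
      refine ⟨t.subtype (· ≠ v), ?_, hmap⟩
      simp only [Finset.mem_filter, Finset.mem_univ, true_and]
      constructor
      · intro a ha b hb hab
        rw [Finset.mem_coe, Finset.mem_subtype] at ha hb
        rw [gcard_adj]
        exact ht.1.isClique ha hb (fun h => hab (Subtype.ext h))
      · have hc := congrArg Finset.card hmap
        rw [Finset.card_map] at hc
        rw [hc, ht.1.card_eq]
  omega

/-- deg = number of 2-cliques through `v` -/
lemma deg_eq_degR_two : deg G v = degR G 2 v := by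
  rw [deg_eq_card, degR_eq_card]
  apply Finset.card_bij (fun t _ => ({v, t} : Finset V))
  · intro t ht
    simp only [Finset.mem_filter, Finset.mem_univ, true_and] at ht ⊢
    refine ⟨⟨?_, ?_⟩, by simp⟩
    · intro a ha b hb hab
      simp only [Finset.coe_insert, Set.mem_insert_iff, Finset.coe_singleton,
        Set.mem_singleton_iff] at ha hb
      rcases ha with rfl | rfl <;> rcases hb with rfl | rfl <;>
        first | exact absurd rfl hab | exact ht | exact ht.symm
    · rw [Finset.card_insert_of_notMem (by simp [ht.ne]), Finset.card_singleton]
  · intro a ha b hb h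
    simp only [Finset.mem_filter, Finset.mem_univ, true_and] at ha hb
    have : a ∈ ({v, b} : Finset V) := h ▸ (by simp : a ∈ ({v, a} : Finset V))
    simp only [Finset.mem_insert, Finset.mem_singleton] at this
    rcases this with rfl | rfl
    · exact absurd ha (G.irrefl)
    · rfl
  · intro s hs
    simp only [Finset.mem_filter, Finset.mem_univ, true_and] at hs
    obtain ⟨⟨hcl, hcard⟩, hv⟩ := hs
    obtain ⟨a, b, hab, rfl⟩ := Finset.card_eq_two.mp hcard
    simp only [Finset.mem_insert, Finset.mem_singleton] at hv
    rcases hv with rfl | rfl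
    · refine ⟨b, ?_, rfl⟩
      simp only [Finset.mem_filter, Finset.mem_univ, true_and]
      exact hcl (by simp) (by simp) hab
    · refine ⟨a, ?_, ?_⟩
      · simp only [Finset.mem_filter, Finset.mem_univ, true_and]
        exact hcl (by simp) (by simp) hab.symm
      · rw [Finset.pair_comm]

lemma card_nonadj (y : V) : (univ.filter (fun t => t ≠ y ∧ ¬ G.Adj y t)).card
    = Fintype.card V - 1 - deg G y := by
  have h1 : (univ.filter (fun t => t ≠ y)).card = Fintype.card V - 1 := by
    rw [Finset.filter_ne', Finset.card_erase_of_mem (mem_univ _), Finset.card_univ]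
  have h2 := Finset.card_filter_add_card_filter_not
    (s := univ.filter (fun t => t ≠ y)) (p := fun t => G.Adj y t)
  rw [Finset.filter_filter, Finset.filter_filter] at h2
  have h3 : (univ.filter (fun t => t ≠ y ∧ G.Adj y t)) = univ.filter (fun t => G.Adj y t) := by
    ext t
    simp only [Finset.mem_filter, Finset.mem_univ, true_and, and_iff_right_iff_imp]
    exact fun h => (G.ne_of_adj h).symm
  rw [h3, h1, ← deg_eq_card] at h2
  omega

lemma kappa_zero : kappa G 0 = 1 := by
  rw [kappa_eq_card]
  have : (univ.filter (fun s : Finset V => G.IsNClique 0 s)) = {∅} := by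
    ext s; simp [SimpleGraph.isNClique_zero]
  rw [this, Finset.card_singleton]

lemma kappa_one : kappa G 1 = Fintype.card V := by
  rw [kappa_eq_card]
  have : (univ.filter (fun s : Finset V => G.IsNClique 1 s))
      = univ.image (fun a : V => ({a} : Finset V)) := by
    ext s
    simp [SimpleGraph.isNClique_one, eq_comm]
  rw [this, Finset.card_image_of_injective _ Finset.singleton_injective, Finset.card_univ]

end Bridge

/-! ### Transfer along isomorphisms -/

section Iso
variable {α β : Type*} {A : SimpleGraph α} {B : SimpleGraph β}

lemma map_eq_of_iso (e : A ≃g B) : A.map e.toEquiv.toEmbedding = B := by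
  ext x y
  simp only [SimpleGraph.map_adj, Equiv.toEmbedding_apply]
  constructor
  · rintro ⟨a, b, hab, rfl, rfl⟩
    exact e.map_adj_iff.mpr hab
  · intro h
    exact ⟨e.symm x, e.symm y, by simpa using e.symm.map_adj_iff.mpr h, by simp, by simp⟩

lemma kappa_iso (e : A ≃g B) (r : ℕ) : kappa A r = kappa B r := by
  rw [kappa, kappa, ← map_eq_of_iso e,
    show A.map e.toEquiv.toEmbedding = A.map e.toEquiv from rfl, SimpleGraph.cliqueSet_map_of_equiv]
  exact (Set.ncard_image_of_injective _ (Finset.map_injective _)).symm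

/-- number of universal vertices -/
noncomputable def ucount {W : Type*} [Fintype W] (K : SimpleGraph W) : ℕ :=
  (univ.filter (fun t => ∀ s, s ≠ t → K.Adj t s)).card

lemma ucount_iso [Fintype α] [Fintype β] (e : A ≃g B) : ucount A = ucount B := by
  apply Finset.card_bij (fun t _ => e t)
  · intro t ht
    simp only [Finset.mem_filter, Finset.mem_univ, true_and] at ht ⊢
    intro s hs
    have : e.symm s ≠ t := fun h => hs (by rw [← h]; simp)
    have := ht _ this
    have h2 := e.map_adj_iff.mpr this
    simpa using h2
  · intro a _ b _ h
    exact e.toEquiv.injective h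
  · intro x hx
    simp only [Finset.mem_filter, Finset.mem_univ, true_and] at hx
    refine ⟨e.symm x, ?_, by simp⟩
    simp only [Finset.mem_filter, Finset.mem_univ, true_and]
    intro s hs
    have : e s ≠ x := fun h => hs (by rw [← h]; simp)
    have := hx _ this
    have h2 := e.symm.map_adj_iff.mpr this
    simpa using h2
end Iso

/-- the number of max-degree vertices whose unique non-neighbour is `v` -/
noncomputable def nnCount {n : ℕ} (G : SimpleGraph (Fin n)) (v : Fin n) : ℕ :=
  (univ.filter (fun y => deg G y = n - 2 ∧ y ≠ v ∧ ¬ G.Adj y v)).card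

lemma ucount_gcard {n : ℕ} (G : SimpleGraph (Fin n)) (hn : 2 ≤ n)
    (hΔ : ∀ t, deg G t ≤ n - 2) (v : Fin n) :
    ucount (gcard G v) = nnCount G v := by
  rw [nnCount]
  apply Finset.card_bij (fun (t : {x : Fin n // x ≠ v}) _ => (t : Fin n))
  · intro t ht
    simp only [ucount, Finset.mem_filter, Finset.mem_univ, true_and] at ht ⊢
    have hadj : ∀ x : Fin n, x ≠ v → x ≠ (t : Fin n) → G.Adj (t : Fin n) x := by
      intro x hxv hxt
      have hs : (⟨x, hxv⟩ : {x : Fin n // x ≠ v}) ≠ t := fun h => hxt (congrArg Subtype.val h)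
      have := ht _ hs
      rwa [gcard_adj] at this
    have hnv : ¬ G.Adj (t : Fin n) v := by
      intro hav
      have hsub : univ.erase (t : Fin n) ⊆ univ.filter (fun x => G.Adj (t : Fin n) x) := by
        intro x hx
        rw [Finset.mem_erase] at hx
        rw [Finset.mem_filter]
        refine ⟨mem_univ _, ?_⟩
        by_cases hxv : x = v
        · rwa [hxv]
        · exact hadj x hxv hx.1
      have hcard := Finset.card_le_card hsub
      rw [Finset.card_erase_of_mem (mem_univ _), Finset.card_univ, Fintype.card_fin,
        ← deg_eq_card] at hcard
      have := hΔ (t : Fin n)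
      omega
    have hdeg : deg G (t : Fin n) = n - 2 := by
      rw [deg_eq_card]
      have : univ.filter (fun x => G.Adj (t : Fin n) x) = (univ.erase v).erase (t : Fin n) := by
        ext x
        simp only [Finset.mem_filter, Finset.mem_univ, true_and, Finset.mem_erase]
        constructor
        · intro h
          exact ⟨(G.ne_of_adj h).symm, fun hxv => hnv (hxv ▸ h), trivial⟩
        · rintro ⟨hxt, hxv, -⟩
          exact hadj x hxv hxt
      have hmem : (t : Fin n) ∈ univ.erase v := Finset.mem_erase.mpr ⟨t.2, mem_univ _⟩
      rw [this, Finset.card_erase_of_mem hmem, Finset.card_erase_of_mem (mem_univ _),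
        Finset.card_univ, Fintype.card_fin]
      omega
    exact ⟨hdeg, t.2, hnv⟩
  · intro a _ b _ h
    exact Subtype.ext h
  · intro y hy
    simp only [Finset.mem_filter, Finset.mem_univ, true_and] at hy
    obtain ⟨hdeg, hyv, hnadj⟩ := hy
    refine ⟨⟨y, hyv⟩, ?_, rfl⟩
    simp only [ucount, Finset.mem_filter, Finset.mem_univ, true_and]
    intro s hs
    rw [gcard_adj]
    by_contra hna
    have hpair : ({v, (s : Fin n)} : Finset (Fin n))
        ⊆ univ.filter (fun t => t ≠ y ∧ ¬ G.Adj y t) := by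
      intro x hx
      rw [Finset.mem_insert, Finset.mem_singleton] at hx
      rw [Finset.mem_filter]
      rcases hx with rfl | rfl
      · exact ⟨mem_univ _, Ne.symm hyv, hnadj⟩
      · refine ⟨mem_univ _, ?_, hna⟩
        intro h
        exact hs (Subtype.ext h)
    have h2 := Finset.card_le_card hpair
    rw [Finset.card_pair (fun h => s.2 h.symm)] at h2
    rw [card_nonadj, Fintype.card_fin, hdeg] at h2
    omega

/-- unique non-neighbour: every vertex other than `y, vbar` is adjacent to `y`. -/
lemma adj_of_max {n : ℕ} (G : SimpleGraph (Fin n)) (hn : 2 ≤ n) {y vbar : Fin n}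
    (hy : deg G y = n - 2) (hvy : vbar ≠ y) (hnadj : ¬ G.Adj y vbar)
    {b : Fin n} (hby : b ≠ y) (hbv : b ≠ vbar) : G.Adj y b := by
  by_contra hna
  have hpair : ({vbar, b} : Finset (Fin n)) ⊆ univ.filter (fun t => t ≠ y ∧ ¬ G.Adj y t) := by
    intro x hx
    rw [Finset.mem_insert, Finset.mem_singleton] at hx
    rw [Finset.mem_filter]
    rcases hx with rfl | rfl
    · exact ⟨mem_univ _, hvy, hnadj⟩
    · exact ⟨mem_univ _, hby, hna⟩
  have h2 := Finset.card_le_card hpair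
  rw [Finset.card_pair (fun h => hbv h.symm)] at h2
  rw [card_nonadj, Fintype.card_fin, hy] at h2
  omega

/-- Key identity: `(r+1)`-cliques through a max-degree vertex `y` biject with
`r`-cliques avoiding `y` and its non-neighbour `vbar`. -/
lemma degR_succ_of_max {n r : ℕ} (G : SimpleGraph (Fin n)) (hn : 2 ≤ n)
    {y vbar : Fin n} (hy : deg G y = n - 2) (hvy : vbar ≠ y) (hnadj : ¬ G.Adj y vbar) :
    degR G (r+1) y + degR G r y + degR G r vbar = kappa G r := by
  have hsplit1 := Finset.card_filter_add_card_filter_not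
    (s := univ.filter (fun s : Finset (Fin n) => G.IsNClique r s)) (p := fun s => y ∈ s)
  rw [Finset.filter_filter, Finset.filter_filter] at hsplit1
  have hsplit2 := Finset.card_filter_add_card_filter_not
    (s := univ.filter (fun s : Finset (Fin n) => G.IsNClique r s ∧ y ∉ s))
    (p := fun s => vbar ∈ s)
  rw [Finset.filter_filter, Finset.filter_filter] at hsplit2
  have hB : (univ.filter (fun s : Finset (Fin n) => (G.IsNClique r s ∧ y ∉ s) ∧ vbar ∈ s))
      = univ.filter (fun s : Finset (Fin n) => G.IsNClique r s ∧ vbar ∈ s) := by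
    ext s
    simp only [Finset.mem_filter, Finset.mem_univ, true_and]
    constructor
    · rintro ⟨⟨h1, _⟩, h2⟩; exact ⟨h1, h2⟩
    · rintro ⟨h1, h2⟩
      refine ⟨⟨h1, fun hys => ?_⟩, h2⟩
      exact hnadj (h1.isClique hys h2 (fun h => hvy h.symm))
  have hbij : degR G (r+1) y
      = (univ.filter (fun s : Finset (Fin n) => (G.IsNClique r s ∧ y ∉ s) ∧ vbar ∉ s)).card := by
    rw [degR_eq_card]
    apply Finset.card_bij (fun s _ => s.erase y)
    · intro s hs
      simp only [Finset.mem_filter, Finset.mem_univ, true_and] at hs ⊢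
      obtain ⟨hcl, hmem⟩ := hs
      refine ⟨⟨⟨hcl.isClique.subset (Finset.erase_subset _ _), ?_⟩, Finset.notMem_erase _ _⟩, ?_⟩
      · rw [Finset.card_erase_of_mem hmem, hcl.card_eq]
        omega
      · intro hvb
        have hvs : vbar ∈ s := Finset.mem_of_mem_erase hvb
        exact hnadj (hcl.isClique hmem hvs (fun h => hvy h.symm))
    · intro s hs t ht h
      simp only [Finset.mem_filter, Finset.mem_univ, true_and] at hs ht
      rw [← Finset.insert_erase hs.2, ← Finset.insert_erase ht.2, h]
    · intro s' hs'
      simp only [Finset.mem_filter, Finset.mem_univ, true_and] at hs'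
      obtain ⟨⟨hcl, hys⟩, hvs⟩ := hs'
      refine ⟨insert y s', ?_, ?_⟩
      · simp only [Finset.mem_filter, Finset.mem_univ, true_and]
        refine ⟨hcl.insert (fun b hb => ?_), Finset.mem_insert_self _ _⟩
        exact adj_of_max G hn hy hvy hnadj
          (fun h => hys (h ▸ hb)) (fun h => hvs (h ▸ hb))
      · exact Finset.erase_insert hys
  rw [hbij, degR_eq_card, degR_eq_card, kappa_eq_card, ← hsplit1, ← hsplit2, hB]
  omega

/-- extend `π` to a bijection of the whole vertex set sending `u` to `w` -/
noncomputable def extEquiv {n : ℕ} (u w : Fin n)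
    (π : {x : Fin n // x ≠ u} ≃ {y : Fin n // y ≠ w}) : Fin n ≃ Fin n where
  toFun v := if h : v = u then w else (π ⟨v, h⟩ : Fin n)
  invFun t := if h : t = w then u else (π.symm ⟨t, h⟩ : Fin n)
  left_inv v := by
    by_cases h : v = u
    · simp [h]
    · simp only [dif_neg h, dif_neg (π ⟨v, h⟩).2]
      have : (⟨((π ⟨v, h⟩) : Fin n), (π ⟨v, h⟩).2⟩ : {y : Fin n // y ≠ w}) = π ⟨v, h⟩ := rfl
      rw [this, Equiv.symm_apply_apply]
  right_inv t := by
    by_cases h : t = w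
    · simp [h]
    · simp only [dif_neg h, dif_neg (π.symm ⟨t, h⟩).2]
      have : (⟨((π.symm ⟨t, h⟩) : Fin n), (π.symm ⟨t, h⟩).2⟩ : {x : Fin n // x ≠ u})
          = π.symm ⟨t, h⟩ := rfl
      rw [this, Equiv.apply_symm_apply]

lemma extEquiv_apply_ne {n : ℕ} (u w : Fin n) (π : {x : Fin n // x ≠ u} ≃ {y : Fin n // y ≠ w})
    {v : Fin n} (h : v ≠ u) : extEquiv u w π v = (π ⟨v, h⟩ : Fin n) := by
  simp [extEquiv, dif_neg h]

lemma extEquiv_apply_u {n : ℕ} (u w : Fin n) (π : {x : Fin n // x ≠ u} ≃ {y : Fin n // y ≠ w}) :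
    extEquiv u w π u = w := by simp [extEquiv]

/-- swap a double sum over a filtered index into a weighted sum -/
lemma sum_filter_weight {V : Type*} [Fintype V] [DecidableEq V]
    (P : V → Prop) [DecidablePred P] (Q : V → V → Prop) [∀ y, DecidablePred (Q y)]
    (g : V → ℤ) :
    ∑ y ∈ univ.filter P, ∑ v ∈ univ.filter (fun v => Q y v), g v
      = ∑ v : V, ((univ.filter (fun y => P y ∧ Q y v)).card : ℤ) * g v := by
  have h1 : ∀ y, ∑ v ∈ univ.filter (fun v => Q y v), g v
      = ∑ v : V, if Q y v then g v else 0 := fun y => Finset.sum_filter _ _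
  simp_rw [h1]
  rw [Finset.sum_comm]
  refine Finset.sum_congr rfl (fun v _ => ?_)
  rw [← Finset.sum_filter, Finset.filter_filter, Finset.sum_const, nsmul_eq_mul]

lemma sum_nnCount {n : ℕ} (G : SimpleGraph (Fin n)) (hn : 2 ≤ n) :
    ∑ v : Fin n, nnCount G v = (univ.filter (fun y => deg G y = n - 2)).card := by
  have h1 : ∀ v, nnCount G v
      = ∑ y : Fin n, if (deg G y = n - 2 ∧ y ≠ v ∧ ¬ G.Adj y v) then 1 else 0 := by
    intro v; rw [nnCount, Finset.card_filter]
  simp_rw [h1]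
  rw [Finset.sum_comm, Finset.card_filter]
  refine Finset.sum_congr rfl (fun y _ => ?_)
  by_cases hy : deg G y = n - 2
  · rw [if_pos hy]
    have h2 : (∑ v : Fin n, if (deg G y = n - 2 ∧ y ≠ v ∧ ¬ G.Adj y v) then 1 else 0)
        = (univ.filter (fun v => v ≠ y ∧ ¬ G.Adj y v)).card := by
      rw [Finset.card_filter]
      refine Finset.sum_congr rfl (fun v _ => ?_)
      refine if_congr ?_ rfl rfl
      constructor
      · rintro ⟨-, h, h2⟩; exact ⟨Ne.symm h, h2⟩
      · rintro ⟨h, h2⟩; exact ⟨hy, Ne.symm h, h2⟩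
    rw [h2, card_nonadj, Fintype.card_fin, hy]
    omega
  · rw [if_neg hy]
    exact Finset.sum_eq_zero (fun v _ => if_neg (fun h => hy h.1))

theorem clique_count_of_maxDeg_n_sub_two_hidden_small {n : ℕ} (hn : 7 ≤ n)
    (G H : SimpleGraph (Fin n)) (u w : Fin n)
    (π : {x : Fin n // x ≠ u} ≃ {y : Fin n // y ≠ w})
    (hshare : ShareCardsVia G H u w π)
    (hDeltaG : maxDeg G = n - 2) (hDeltaH : maxDeg H = n - 2)
    (hu : deg G u < n - 2) (hw : deg H w < n - 2) :
    ∀ r : ℕ, 1 ≤ r → kappa G r = kappa H r := by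
  have hn2 : (2:ℕ) ≤ n := by omega
  set σ : Fin n ≃ Fin n := extEquiv u w π with hσ
  have hσne : ∀ (v : Fin n) (h : v ≠ u), σ v = (π ⟨v, h⟩ : Fin n) := by
    intro v h; rw [hσ]; exact extEquiv_apply_ne u w π h
  have hσu : σ u = w := by rw [hσ]; exact extEquiv_apply_u u w π
  have hσvw : ∀ (v : Fin n), v ≠ u → σ v ≠ w := by
    intro v h; rw [hσne v h]; exact (π ⟨v, h⟩).2
  have hσnu : ∀ (t : Fin n), t ≠ w → σ.symm t ≠ u := by
    intro t ht he
    exact ht (by rw [← Equiv.apply_symm_apply σ t, he, hσu])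
  -- card transfers
  have hcardiso : ∀ (v : Fin n) (h : v ≠ u) (s : ℕ),
      kappa (gcard G v) s = kappa (gcard H (σ v)) s := by
    intro v h s
    rw [hσne v h]
    exact kappa_iso (hshare ⟨v, h⟩).some s
  have hkey : ∀ (v : Fin n), v ≠ u → ∀ s : ℕ,
      kappa G s + degR H s (σ v) = kappa H s + degR G s v := by
    intro v hv s
    have h1 := kappa_gcard_add_degR G s v
    have h2 := kappa_gcard_add_degR H s (σ v)
    have h3 := hcardiso v hv s
    omega
  -- max degree facts
  unfold maxDeg at hDeltaG hDeltaH
  have hdegleG : ∀ t, deg G t ≤ n - 2 := by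
    intro t
    have h : deg G t ≤ univ.sup (fun v => deg G v) :=
      Finset.le_sup (f := fun v => deg G v) (Finset.mem_univ t)
    omega
  have hdegleH : ∀ t, deg H t ≤ n - 2 := by
    intro t
    have h : deg H t ≤ univ.sup (fun v => deg H v) :=
      Finset.le_sup (f := fun v => deg H v) (Finset.mem_univ t)
    omega
  have hne : (univ : Finset (Fin n)).Nonempty := ⟨⟨0, by omega⟩, mem_univ _⟩
  have hexG : ∃ y, deg G y = n - 2 := by
    obtain ⟨y, -, hy⟩ := Finset.exists_mem_eq_sup univ hne (fun v => deg G v)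
    have h2 : deg G y = univ.sup (fun v => deg G v) := hy.symm
    exact ⟨y, by omega⟩
  have hexH : ∃ x, deg H x = n - 2 := by
    obtain ⟨x, -, hx⟩ := Finset.exists_mem_eq_sup univ hne (fun v => deg H v)
    have h2 : deg H x = univ.sup (fun v => deg H v) := hx.symm
    exact ⟨x, by omega⟩
  -- degree transfer
  have hc : ∀ v : Fin n, v ≠ u → kappa G 2 + deg H (σ v) = kappa H 2 + deg G v := by
    intro v hv
    have h := hkey v hv 2
    rw [deg_eq_degR_two G v, deg_eq_degR_two H (σ v)]
    omega
  have hk2 : kappa G 2 = kappa H 2 := by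
    rcases Nat.lt_trichotomy (kappa G 2) (kappa H 2) with h | h | h
    · obtain ⟨y, hy⟩ := hexG
      have hyu : y ≠ u := fun he => by rw [he] at hy; omega
      have h1 := hc y hyu
      have h2 := hdegleH (σ y)
      omega
    · exact h
    · obtain ⟨x, hx⟩ := hexH
      have hxw : x ≠ w := fun he => by rw [he] at hx; omega
      have hvu : σ.symm x ≠ u := hσnu x hxw
      have h1 := hc (σ.symm x) hvu
      rw [Equiv.apply_symm_apply] at h1
      have h2 := hdegleG (σ.symm x)
      omega
  have hdeg : ∀ v : Fin n, v ≠ u → deg G v = deg H (σ v) := by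
    intro v hv
    have := hc v hv
    omega
  -- number of max-degree vertices is equal
  have hL : (univ.filter (fun y : Fin n => deg G y = n - 2)).card
      = (univ.filter (fun x : Fin n => deg H x = n - 2)).card := by
    apply Finset.card_bij (fun y _ => σ y)
    · intro y hy
      rw [Finset.mem_filter] at hy ⊢
      have hyu : y ≠ u := fun he => by rw [he] at hy; have := hy.2; omega
      exact ⟨mem_univ _, by rw [← hdeg y hyu]; exact hy.2⟩
    · intro a _ b _ h
      exact σ.injective h
    · intro x hx
      rw [Finset.mem_filter] at hx
      have hxw : x ≠ w := fun he => by rw [he] at hx; have := hx.2; omega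
      refine ⟨σ.symm x, ?_, Equiv.apply_symm_apply σ x⟩
      rw [Finset.mem_filter]
      have hvu : σ.symm x ≠ u := hσnu x hxw
      have h1 := hdeg _ hvu
      rw [Equiv.apply_symm_apply] at h1
      exact ⟨mem_univ _, by rw [h1]; exact hx.2⟩
  -- nnCount transfer
  have hnn' : ∀ v : Fin n, v ≠ u → nnCount G v = nnCount H (σ v) := by
    intro v hv
    rw [← ucount_gcard G hn2 hdegleG v, ← ucount_gcard H hn2 hdegleH (σ v), hσne v hv]
    exact ucount_iso (hshare ⟨v, hv⟩).some
  have hnn : ∀ v : Fin n, nnCount G v = nnCount H (σ v) := by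
    intro v
    by_cases hv : v = u
    · rw [hv, hσu]
      have t1 := sum_nnCount G hn2
      have t2 := sum_nnCount H hn2
      have t3 : ∑ v ∈ univ.erase u, nnCount G v = ∑ t ∈ univ.erase w, nnCount H t := by
        apply Finset.sum_bij (fun v _ => σ v)
        · intro a ha
          rw [Finset.mem_erase] at ha ⊢
          exact ⟨hσvw a ha.1, mem_univ _⟩
        · intro a _ b _ h
          exact σ.injective h
        · intro x hx
          rw [Finset.mem_erase] at hx
          exact ⟨σ.symm x, Finset.mem_erase.mpr ⟨hσnu x hx.1, mem_univ _⟩,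
            Equiv.apply_symm_apply σ x⟩
        · intro a ha
          exact hnn' a (Finset.mem_erase.mp ha).1
      have t4 := Finset.add_sum_erase univ (nnCount G) (mem_univ u)
      have t5 := Finset.add_sum_erase univ (nnCount H) (mem_univ w)
      omega
    · exact hnn' v hv
  -- singleton non-neighbour sets
  have hsingG : ∀ y : Fin n, deg G y = n - 2 →
      ∃ vbar, (univ.filter (fun v => v ≠ y ∧ ¬ G.Adj y v)) = {vbar} := by
    intro y hy
    have h1 := card_nonadj G y
    rw [Fintype.card_fin, hy] at h1
    exact Finset.card_eq_one.mp (by omega)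
  have hsingH : ∀ x : Fin n, deg H x = n - 2 →
      ∃ t, (univ.filter (fun t => t ≠ x ∧ ¬ H.Adj x t)) = {t} := by
    intro x hx
    have h1 := card_nonadj H x
    rw [Fintype.card_fin, hx] at h1
    exact Finset.card_eq_one.mp (by omega)
  -- MAIN INDUCTION
  have main : ∀ r : ℕ, kappa G r = kappa H r := by
    intro r
    induction r with
    | zero => rw [kappa_zero, kappa_zero]
    | succ r IH =>
      rcases Nat.eq_zero_or_pos r with rfl | hr
      · rw [kappa_one, kappa_one]
      -- degR transfer at level r
      have hgf' : ∀ v : Fin n, v ≠ u → degR G r v = degR H r (σ v) := by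
        intro v hv
        have := hkey v hv r
        omega
      have hgfu : degR G r u = degR H r w := by
        have h1 := sum_degR G r
        have h2 := sum_degR H r
        rw [IH] at h1
        have h3 : ∑ v ∈ univ.erase u, degR G r v = ∑ t ∈ univ.erase w, degR H r t := by
          apply Finset.sum_bij (fun v _ => σ v)
          · intro a ha
            rw [Finset.mem_erase] at ha ⊢
            exact ⟨hσvw a ha.1, mem_univ _⟩
          · intro a _ b _ h
            exact σ.injective h
          · intro x hx
            rw [Finset.mem_erase] at hx
            exact ⟨σ.symm x, Finset.mem_erase.mpr ⟨hσnu x hx.1, mem_univ _⟩,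
              Equiv.apply_symm_apply σ x⟩
          · intro a ha
            exact hgf' a (Finset.mem_erase.mp ha).1
        have t4 := Finset.add_sum_erase univ (degR G r) (mem_univ u)
        have t5 := Finset.add_sum_erase univ (degR H r) (mem_univ w)
        omega
      have hgf : ∀ v : Fin n, degR G r v = degR H r (σ v) := by
        intro v
        by_cases hv : v = u
        · subst hv; rw [hσu]; exact hgfu
        · exact hgf' v hv
      -- relation (C)
      have hC : ∀ y vbar t : Fin n, deg G y = n - 2 → vbar ≠ y → ¬ G.Adj y vbar →
          t ≠ σ y → ¬ H.Adj (σ y) t →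
          kappa G (r+1) + degR G r vbar = kappa H (r+1) + degR H r t := by
        intro y vbar t hy hvy hna ht hnaH
        have hyu : y ≠ u := fun he => by rw [he] at hy; omega
        have hyH : deg H (σ y) = n - 2 := by rw [← hdeg y hyu]; exact hy
        have e1 := degR_succ_of_max (r := r) G hn2 hy hvy hna
        have e2 := degR_succ_of_max (r := r) H hn2 hyH ht hnaH
        have e3 := hkey y hyu (r+1)
        have e4 := hgf y
        omega
      -- per max-degree vertex equation, summed
      have claimA : ∀ y ∈ univ.filter (fun y : Fin n => deg G y = n - 2),
          (∑ v ∈ univ.filter (fun v => v ≠ y ∧ ¬ G.Adj y v), (degR G r v : ℤ))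
            + ((kappa G (r+1) : ℤ) - (kappa H (r+1) : ℤ))
          = ∑ t ∈ univ.filter (fun t => t ≠ σ y ∧ ¬ H.Adj (σ y) t), (degR H r t : ℤ) := by
        intro y hy
        rw [Finset.mem_filter] at hy
        have hy2 := hy.2
        have hyu : y ≠ u := fun he => by rw [he] at hy2; omega
        have hyH : deg H (σ y) = n - 2 := by rw [← hdeg y hyu]; exact hy2
        obtain ⟨vbar, hvb⟩ := hsingG y hy2
        obtain ⟨t, htt⟩ := hsingH (σ y) hyH
        have hvbm : vbar ∈ univ.filter (fun v => v ≠ y ∧ ¬ G.Adj y v) := by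
          rw [hvb]; exact Finset.mem_singleton_self vbar
        have httm : t ∈ univ.filter (fun t => t ≠ σ y ∧ ¬ H.Adj (σ y) t) := by
          rw [htt]; exact Finset.mem_singleton_self t
        rw [Finset.mem_filter] at hvbm httm
        have := hC y vbar t hy2 hvbm.2.1 hvbm.2.2 httm.2.1 httm.2.2
        rw [hvb, htt, Finset.sum_singleton, Finset.sum_singleton]
        omega
      -- sums of inner sums equal weighted sums
      have hwG := sum_filter_weight (V := Fin n) (fun y => deg G y = n - 2)
        (fun y v => v ≠ y ∧ ¬ G.Adj y v) (fun v => (degR G r v : ℤ))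
      have claimBG : (∑ y ∈ univ.filter (fun y : Fin n => deg G y = n - 2),
            ∑ v ∈ univ.filter (fun v => v ≠ y ∧ ¬ G.Adj y v), (degR G r v : ℤ))
          = ∑ v : Fin n, (nnCount G v : ℤ) * (degR G r v : ℤ) := by
        rw [hwG]
        refine Finset.sum_congr rfl (fun v _ => ?_)
        congr 2
        rw [nnCount]
        apply Finset.card_bij (fun z _ => z)
        · intro a ha
          simp only [Finset.mem_filter, Finset.mem_univ, true_and] at ha ⊢
          exact ⟨ha.1, Ne.symm ha.2.1, ha.2.2⟩
        · intro a _ b _ h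
          exact h
        · intro b hb
          simp only [Finset.mem_filter, Finset.mem_univ, true_and] at hb
          refine ⟨b, ?_, rfl⟩
          simp only [Finset.mem_filter, Finset.mem_univ, true_and]
          exact ⟨hb.1, Ne.symm hb.2.1, hb.2.2⟩
      have hwH := sum_filter_weight (V := Fin n) (fun x => deg H x = n - 2)
        (fun x t => t ≠ x ∧ ¬ H.Adj x t) (fun t => (degR H r t : ℤ))
      have claimBH : (∑ x ∈ univ.filter (fun x : Fin n => deg H x = n - 2),
            ∑ t ∈ univ.filter (fun t => t ≠ x ∧ ¬ H.Adj x t), (degR H r t : ℤ))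
          = ∑ t : Fin n, (nnCount H t : ℤ) * (degR H r t : ℤ) := by
        rw [hwH]
        refine Finset.sum_congr rfl (fun t _ => ?_)
        congr 2
        rw [nnCount]
        apply Finset.card_bij (fun z _ => z)
        · intro a ha
          simp only [Finset.mem_filter, Finset.mem_univ, true_and] at ha ⊢
          exact ⟨ha.1, Ne.symm ha.2.1, ha.2.2⟩
        · intro a _ b _ h
          exact h
        · intro b hb
          simp only [Finset.mem_filter, Finset.mem_univ, true_and] at hb
          refine ⟨b, ?_, rfl⟩
          simp only [Finset.mem_filter, Finset.mem_univ, true_and]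
          exact ⟨hb.1, Ne.symm hb.2.1, hb.2.2⟩
      have claimC : ∑ y ∈ univ.filter (fun y : Fin n => deg G y = n - 2),
            (∑ t ∈ univ.filter (fun t => t ≠ σ y ∧ ¬ H.Adj (σ y) t), (degR H r t : ℤ))
          = ∑ x ∈ univ.filter (fun x : Fin n => deg H x = n - 2),
            (∑ t ∈ univ.filter (fun t => t ≠ x ∧ ¬ H.Adj x t), (degR H r t : ℤ)) := by
        apply Finset.sum_bij (fun y _ => σ y)
        · intro y hy
          rw [Finset.mem_filter] at hy ⊢
          have hyu : y ≠ u := fun he => by rw [he] at hy; have := hy.2; omega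
          exact ⟨mem_univ _, by rw [← hdeg y hyu]; exact hy.2⟩
        · intro a _ b _ h
          exact σ.injective h
        · intro x hx
          rw [Finset.mem_filter] at hx
          have hxw : x ≠ w := fun he => by rw [he] at hx; have := hx.2; omega
          refine ⟨σ.symm x, ?_, Equiv.apply_symm_apply σ x⟩
          rw [Finset.mem_filter]
          have hvu : σ.symm x ≠ u := hσnu x hxw
          have h1 := hdeg _ hvu
          rw [Equiv.apply_symm_apply] at h1
          exact ⟨mem_univ _, by rw [h1]; exact hx.2⟩
        · intro a _
          rfl
      have claimD : ∑ v : Fin n, (nnCount G v : ℤ) * (degR G r v : ℤ)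
          = ∑ t : Fin n, (nnCount H t : ℤ) * (degR H r t : ℤ) := by
        apply Fintype.sum_equiv σ
        intro v
        rw [hnn v, hgf v]
      -- combine
      have hfin := Finset.sum_congr rfl claimA
      rw [Finset.sum_add_distrib, Finset.sum_const, claimBG, claimC, claimBH, ← claimD,
        nsmul_eq_mul] at hfin
      have hcard : 0 < (univ.filter (fun y : Fin n => deg G y = n - 2)).card := by
        obtain ⟨y, hy⟩ := hexG
        exact Finset.card_pos.mpr ⟨y, Finset.mem_filter.mpr ⟨mem_univ _, hy⟩⟩
      have h0 : ((univ.filter (fun y : Fin n => deg G y = n - 2)).card : ℤ)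
          * ((kappa G (r+1) : ℤ) - (kappa H (r+1) : ℤ)) = 0 := by linarith
      rcases mul_eq_zero.mp h0 with h | h
      · exfalso
        have : ((univ.filter (fun y : Fin n => deg G y = n - 2)).card : ℤ) ≠ 0 := by
          have := hcard
          omega
        exact this h
      · omega
  intro r _
  exact main r
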